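/- Let ≿ be an uncertainty averse variational preference on 𝓕 represented by f ↦ min_{p∈Δ}(∫ u(f) dp + c₀(p)), where u : X → ℝ is nonconstant affine with 0 in the interior of u(X) and c₀ ∈ 𝒞 is grounded (min_{p∈Δ} c₀(p) = 0). Then its maximal grounded subset B* of 𝒞 satisfies B* = {b ∈ 𝒞 : there exists ĉ ∈ 𝒞 with ĉ ≈_u c₀ and min_{p∈Δ}[b(p) + ĉ(p)] ≤ 0}. -/

import Mathlib

open scoped Pointwise
open MeasureTheory

namespace Paper

variable {S V : Type*}

/-- An algebra of subsets of `S` (the events `Σ`). -/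
structure IsSetAlg (𝓐 : Set (Set S)) : Prop where
  empty_mem : ∅ ∈ 𝓐
  compl_mem : ∀ A ∈ 𝓐, Aᶜ ∈ 𝓐
  union_mem : ∀ A ∈ 𝓐, ∀ B ∈ 𝓐, A ∪ B ∈ 𝓐

/-- `B₀(Σ)`: real-valued `Σ`-measurable simple functions. -/
def IsSimpleFn (𝓐 : Set (Set S)) (φ : S → ℝ) : Prop :=
  (Set.range φ).Finite ∧ ∀ t : ℝ, φ ⁻¹' {t} ∈ 𝓐

open Classical in
/-- The integral of a simple function with respect to a finitely additive set function. -/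
noncomputable def fint (p : Set S → ℝ) (φ : S → ℝ) : ℝ :=
  if h : (Set.range φ).Finite then ∑ t ∈ h.toFinset, t * p (φ ⁻¹' {t}) else 0

/-- `Δ`: the finitely additive probabilities on `Σ` (canonically extended by `0` off `Σ`). -/
def Δset (𝓐 : Set (Set S)) : Set (Set S → ℝ) :=
  {p | p Set.univ = 1 ∧ (∀ A ∈ 𝓐, 0 ≤ p A) ∧
    (∀ A ∈ 𝓐, ∀ B ∈ 𝓐, Disjoint A B → p (A ∪ B) = p A + p B) ∧
    ∀ A : Set S, A ∉ 𝓐 → p A = 0}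

/-- The weak* topology `σ(Δ, B₀(Σ))`, i.e. the topology induced by the evaluation maps
`p ↦ ∫ φ dp`, `φ ∈ B₀(Σ)`. -/
noncomputable def weakStar (𝓐 : Set (Set S)) : TopologicalSpace (Set S → ℝ) :=
  TopologicalSpace.induced
    (fun p => fun φ : {φ : S → ℝ // IsSimpleFn 𝓐 φ} => fint p φ.1)
    Pi.topologicalSpace

/-- `𝒞`: the weak*-lower semicontinuous convex functions `c : Δ → (-∞, ∞]`. -/
def Cscr (𝓐 : Set (Set S)) : Set ((Set S → ℝ) → EReal) :=
  {c | (∀ p ∈ Δset 𝓐, ⊥ < c p) ∧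
    (@LowerSemicontinuousOn (Set S → ℝ) EReal (weakStar 𝓐) _ c (Δset 𝓐)) ∧
    ∀ p ∈ Δset 𝓐, ∀ q ∈ Δset 𝓐, ∀ a b : ℝ, 0 ≤ a → 0 ≤ b → a + b = 1 →
      c (a • p + b • q) ≤ (a : EReal) * c p + (b : EReal) * c q}

/-- A subset `C ⊆ 𝒞` is grounded if `sup_{c ∈ C} min_{p ∈ Δ} c p = 0`. -/
def Grounded (𝓐 : Set (Set S)) (C : Set ((Set S → ℝ) → EReal)) : Prop :=
  (⨆ c ∈ C, ⨅ p ∈ Δset 𝓐, c p) = 0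

/-- `min_{p ∈ Δ} (∫ φ dp + c p)`. -/
noncomputable def minVal (𝓐 : Set (Set S)) (c : (Set S → ℝ) → EReal) (φ : S → ℝ) : EReal :=
  ⨅ p ∈ Δset 𝓐, ((fint p φ : EReal) + c p)

/-- `max_{q ∈ Δ} (∫ φ dq - b q)`. -/
noncomputable def maxVal (𝓐 : Set (Set S)) (b : (Set S → ℝ) → EReal) (φ : S → ℝ) : EReal :=
  ⨆ q ∈ Δset 𝓐, ((fint q φ : EReal) - b q)

/-- `max_{c ∈ C} min_{p ∈ Δ} (∫ φ dp + c p)`. -/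
noncomputable def maxminVal (𝓐 : Set (Set S)) (C : Set ((Set S → ℝ) → EReal))
    (φ : S → ℝ) : EReal :=
  ⨆ c ∈ C, minVal 𝓐 c φ

/-- `min_{b ∈ B} max_{q ∈ Δ} (∫ φ dq - b q)`. -/
noncomputable def minmaxVal (𝓐 : Set (Set S)) (B : Set ((Set S → ℝ) → EReal))
    (φ : S → ℝ) : EReal :=
  ⨅ b ∈ B, maxVal 𝓐 b φ

/-- `min_{p ∈ P} ∫ φ dp`. -/
noncomputable def minPVal (P : Set (Set S → ℝ)) (φ : S → ℝ) : EReal :=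
  ⨅ p ∈ P, (fint p φ : EReal)

/-- `max_{q ∈ Q} ∫ φ dq`. -/
noncomputable def maxQVal (Q : Set (Set S → ℝ)) (φ : S → ℝ) : EReal :=
  ⨆ q ∈ Q, (fint q φ : EReal)

/-- `max_{P ∈ Pfam} min_{p ∈ P} ∫ φ dp`. -/
noncomputable def maxminPVal (Pfam : Set (Set (Set S → ℝ))) (φ : S → ℝ) : EReal :=
  ⨆ P ∈ Pfam, minPVal P φ

/-- `min_{Q ∈ Qfam} max_{q ∈ Q} ∫ φ dq`. -/
noncomputable def minmaxQVal (Qfam : Set (Set (Set S → ℝ))) (φ : S → ℝ) : EReal :=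
  ⨅ Q ∈ Qfam, maxQVal Q φ

open Classical in
/-- The convex-analytic indicator `δ_P` of a set `P`. -/
noncomputable def ind (P : Set (Set S → ℝ)) : (Set S → ℝ) → EReal :=
  fun p => if p ∈ P then (0 : EReal) else ⊤

variable [AddCommGroup V] [Module ℝ V]

/-- `𝓕`: the simple acts, i.e. `Σ`-measurable maps `f : S → X` with finitely many values. -/
def Acts (𝓐 : Set (Set S)) (X : Set V) : Set (S → V) :=
  {f | (∀ s, f s ∈ X) ∧ (Set.range f).Finite ∧ ∀ v : V, f ⁻¹' {v} ∈ 𝓐}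

/-- The constant act with value `x`. -/
def constAct (x : V) : S → V := fun _ : S => x

/-- The mixture `α f + (1 - α) g` of two acts, defined statewise. -/
def mix (α : ℝ) (f g : S → V) : S → V := fun s => α • f s + (1 - α) • g s

/-- The statewise utility `u ∘ f` of an act. -/
def uAct (u : V → ℝ) (f : S → V) : S → ℝ := fun s => u (f s)

/-- `u : X → ℝ` is nonconstant and affine on `X`. -/
def IsNonconstAffine (X : Set V) (u : V → ℝ) : Prop :=
  (∀ x ∈ X, ∀ y ∈ X, ∀ t ∈ Set.Icc (0 : ℝ) 1,
      u (t • x + (1 - t) • y) = t * u x + (1 - t) * u y) ∧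
  ∃ x ∈ X, ∃ y ∈ X, u x ≠ u y

/-- A niveloidal preference: Axioms A1 (weak order), A2 (monotonicity), A3 (Archimedean)
and A4 (weak C-independence). -/
structure NiveloidalPref (𝓐 : Set (Set S)) (X : Set V)
    (R : (S → V) → (S → V) → Prop) : Prop where
  nontrivial : ∃ f ∈ Acts 𝓐 X, ∃ g ∈ Acts 𝓐 X, R f g ∧ ¬ R g f
  complete : ∀ f ∈ Acts 𝓐 X, ∀ g ∈ Acts 𝓐 X, R f g ∨ R g f
  transitive : ∀ f ∈ Acts 𝓐 X, ∀ g ∈ Acts 𝓐 X, ∀ h ∈ Acts 𝓐 X, R f g → R g h → R f h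
  monotone : ∀ f ∈ Acts 𝓐 X, ∀ g ∈ Acts 𝓐 X,
    (∀ s : S, R (constAct (f s)) (constAct (g s))) → R f g
  archimedean : ∀ f ∈ Acts 𝓐 X, ∀ g ∈ Acts 𝓐 X, ∀ h ∈ Acts 𝓐 X,
    (R f g ∧ ¬ R g f) → (R g h ∧ ¬ R h g) →
    ∃ α ∈ Set.Ioo (0 : ℝ) 1, ∃ β ∈ Set.Ioo (0 : ℝ) 1,
      (R (mix α f h) g ∧ ¬ R g (mix α f h)) ∧
      (R g (mix β f h) ∧ ¬ R (mix β f h) g)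
  weakCIndep : ∀ f ∈ Acts 𝓐 X, ∀ g ∈ Acts 𝓐 X, ∀ x ∈ X, ∀ y ∈ X,
    ∀ α ∈ Set.Ioo (0 : ℝ) 1,
    R (mix α f (constAct x)) (mix α g (constAct x)) →
    R (mix α f (constAct y)) (mix α g (constAct y))

/-- An invariant biseparable preference: Axioms A1 (weak order), A2 (monotonicity),
A3 (Archimedean) and A7 (C-independence). -/
structure IBPref (𝓐 : Set (Set S)) (X : Set V)
    (R : (S → V) → (S → V) → Prop) : Prop where
  nontrivial : ∃ f ∈ Acts 𝓐 X, ∃ g ∈ Acts 𝓐 X, R f g ∧ ¬ R g f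
  complete : ∀ f ∈ Acts 𝓐 X, ∀ g ∈ Acts 𝓐 X, R f g ∨ R g f
  transitive : ∀ f ∈ Acts 𝓐 X, ∀ g ∈ Acts 𝓐 X, ∀ h ∈ Acts 𝓐 X, R f g → R g h → R f h
  monotone : ∀ f ∈ Acts 𝓐 X, ∀ g ∈ Acts 𝓐 X,
    (∀ s : S, R (constAct (f s)) (constAct (g s))) → R f g
  archimedean : ∀ f ∈ Acts 𝓐 X, ∀ g ∈ Acts 𝓐 X, ∀ h ∈ Acts 𝓐 X,
    (R f g ∧ ¬ R g f) → (R g h ∧ ¬ R h g) →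
    ∃ α ∈ Set.Ioo (0 : ℝ) 1, ∃ β ∈ Set.Ioo (0 : ℝ) 1,
      (R (mix α f h) g ∧ ¬ R g (mix α f h)) ∧
      (R g (mix β f h) ∧ ¬ R (mix β f h) g)
  cIndep : ∀ f ∈ Acts 𝓐 X, ∀ g ∈ Acts 𝓐 X, ∀ x ∈ X, ∀ α ∈ Set.Ioo (0 : ℝ) 1,
    (R f g ↔ R (mix α f (constAct x)) (mix α g (constAct x)))

/-- Axiom A5 (uncertainty aversion). -/
def UncertaintyAverse (𝓐 : Set (Set S)) (X : Set V)
    (R : (S → V) → (S → V) → Prop) : Prop :=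
  ∀ f ∈ Acts 𝓐 X, ∀ g ∈ Acts 𝓐 X, ∀ α ∈ Set.Ioo (0 : ℝ) 1,
    R f g → R g f → R (mix α f g) f

/-- `xf` assigns to every act a certainty equivalent. -/
def IsCE (𝓐 : Set (Set S)) (X : Set V) (R : (S → V) → (S → V) → Prop)
    (xf : (S → V) → V) : Prop :=
  ∀ f ∈ Acts 𝓐 X, xf f ∈ X ∧ R f (constAct (xf f)) ∧ R (constAct (xf f)) f

/-- `C*`: the maximal candidate set of penalty functions. -/
def CstarOf (𝓐 : Set (Set S)) (X : Set V) (u : V → ℝ) (xf : (S → V) → V) :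
    Set ((Set S → ℝ) → EReal) :=
  {c | c ∈ Cscr 𝓐 ∧ ∀ f ∈ Acts 𝓐 X, minVal 𝓐 c (uAct u f) ≤ (u (xf f) : EReal)}

/-- `B*`: the maximal candidate set of reward functions. -/
def BstarOf (𝓐 : Set (Set S)) (X : Set V) (u : V → ℝ) (xf : (S → V) → V) :
    Set ((Set S → ℝ) → EReal) :=
  {b | b ∈ Cscr 𝓐 ∧ ∀ f ∈ Acts 𝓐 X, (u (xf f) : EReal) ≤ maxVal 𝓐 b (uAct u f)}

/-- `Pfam*`: the maximal family of prior sets (maxmin form). -/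
def PstarOf (𝓐 : Set (Set S)) (X : Set V) (u : V → ℝ) (xf : (S → V) → V) :
    Set (Set (Set S → ℝ)) :=
  {P | P ⊆ Δset 𝓐 ∧ P.Nonempty ∧ Convex ℝ P ∧ (@IsCompact _ (weakStar 𝓐) P) ∧
    ∀ f ∈ Acts 𝓐 X, minPVal P (uAct u f) ≤ (u (xf f) : EReal)}

/-- `Qfam*`: the maximal family of prior sets (minmax form). -/
def QstarOf (𝓐 : Set (Set S)) (X : Set V) (u : V → ℝ) (xf : (S → V) → V) :
    Set (Set (Set S → ℝ)) :=
  {Q | Q ⊆ Δset 𝓐 ∧ Q.Nonempty ∧ Convex ℝ Q ∧ (@IsCompact _ (weakStar 𝓐) Q) ∧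
    ∀ f ∈ Acts 𝓐 X, (u (xf f) : EReal) ≤ maxQVal Q (uAct u f)}

/-- `C` yields the maxmin representation of `R` with utility `u`. -/
def MaxminRep (𝓐 : Set (Set S)) (X : Set V) (R : (S → V) → (S → V) → Prop)
    (u : V → ℝ) (C : Set ((Set S → ℝ) → EReal)) : Prop :=
  ∀ f ∈ Acts 𝓐 X, ∀ g ∈ Acts 𝓐 X,
    (R f g ↔ maxminVal 𝓐 C (uAct u g) ≤ maxminVal 𝓐 C (uAct u f))

/-- All indicated maxima over `C` and minima over `Δ` are attained. -/
def MaxminAttained (𝓐 : Set (Set S)) (X : Set V) (u : V → ℝ)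
    (C : Set ((Set S → ℝ) → EReal)) : Prop :=
  ∀ f ∈ Acts 𝓐 X,
    (∀ c ∈ C, ∃ p ∈ Δset 𝓐,
      minVal 𝓐 c (uAct u f) = (fint p (uAct u f) : EReal) + c p) ∧
    ∃ c ∈ C, maxminVal 𝓐 C (uAct u f) = minVal 𝓐 c (uAct u f)

/-- `B` yields the minmax representation of `R` with utility `u`. -/
def MinmaxRep (𝓐 : Set (Set S)) (X : Set V) (R : (S → V) → (S → V) → Prop)
    (u : V → ℝ) (B : Set ((Set S → ℝ) → EReal)) : Prop :=
  ∀ f ∈ Acts 𝓐 X, ∀ g ∈ Acts 𝓐 X,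
    (R f g ↔ minmaxVal 𝓐 B (uAct u g) ≤ minmaxVal 𝓐 B (uAct u f))

/-- All indicated minima over `B` and maxima over `Δ` are attained. -/
def MinmaxAttained (𝓐 : Set (Set S)) (X : Set V) (u : V → ℝ)
    (B : Set ((Set S → ℝ) → EReal)) : Prop :=
  ∀ f ∈ Acts 𝓐 X,
    (∀ b ∈ B, ∃ q ∈ Δset 𝓐,
      maxVal 𝓐 b (uAct u f) = (fint q (uAct u f) : EReal) - b q) ∧
    ∃ b ∈ B, minmaxVal 𝓐 B (uAct u f) = maxVal 𝓐 b (uAct u f)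

/-- A family of nonempty, convex, weak*-compact subsets of `Δ`. -/
def IsPriorFamily (𝓐 : Set (Set S)) (Pfam : Set (Set (Set S → ℝ))) : Prop :=
  Pfam.Nonempty ∧ ∀ P ∈ Pfam,
    P ⊆ Δset 𝓐 ∧ P.Nonempty ∧ Convex ℝ P ∧ (@IsCompact _ (weakStar 𝓐) P)

/-- `Pfam` yields the maxmin representation of `R` with utility `u`. -/
def PRep (𝓐 : Set (Set S)) (X : Set V) (R : (S → V) → (S → V) → Prop)
    (u : V → ℝ) (Pfam : Set (Set (Set S → ℝ))) : Prop :=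
  ∀ f ∈ Acts 𝓐 X, ∀ g ∈ Acts 𝓐 X,
    (R f g ↔ maxminPVal Pfam (uAct u g) ≤ maxminPVal Pfam (uAct u f))

/-- All indicated maxima over `Pfam` and minima over `P` are attained. -/
def PAttained (𝓐 : Set (Set S)) (X : Set V) (u : V → ℝ)
    (Pfam : Set (Set (Set S → ℝ))) : Prop :=
  ∀ f ∈ Acts 𝓐 X,
    (∀ P ∈ Pfam, ∃ p ∈ P, minPVal P (uAct u f) = (fint p (uAct u f) : EReal)) ∧
    ∃ P ∈ Pfam, maxminPVal Pfam (uAct u f) = minPVal P (uAct u f)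

/-- `Qfam` yields the minmax representation of `R` with utility `u`. -/
def QRep (𝓐 : Set (Set S)) (X : Set V) (R : (S → V) → (S → V) → Prop)
    (u : V → ℝ) (Qfam : Set (Set (Set S → ℝ))) : Prop :=
  ∀ f ∈ Acts 𝓐 X, ∀ g ∈ Acts 𝓐 X,
    (R f g ↔ minmaxQVal Qfam (uAct u g) ≤ minmaxQVal Qfam (uAct u f))

/-- All indicated minima over `Qfam` and maxima over `Q` are attained. -/
def QAttained (𝓐 : Set (Set S)) (X : Set V) (u : V → ℝ)
    (Qfam : Set (Set (Set S → ℝ))) : Prop :=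
  ∀ f ∈ Acts 𝓐 X,
    (∀ Q ∈ Qfam, ∃ q ∈ Q, maxQVal Q (uAct u f) = (fint q (uAct u f) : EReal)) ∧
    ∃ Q ∈ Qfam, minmaxQVal Qfam (uAct u f) = maxQVal Q (uAct u f)

/-- `c₁ ≈_u c₂`: `c₁` and `c₂` induce the same variational functional on `B₀(Σ, u(X))`. -/
def ApproxEq (𝓐 : Set (Set S)) (X : Set V) (u : V → ℝ)
    (c₁ c₂ : (Set S → ℝ) → EReal) : Prop :=
  ∀ φ : S → ℝ, IsSimpleFn 𝓐 φ → (∀ s, φ s ∈ u '' X) →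
    minVal 𝓐 c₁ φ = minVal 𝓐 c₂ φ

/-- `R₁` is more ambiguity averse than `R₂`. -/
def MoreAmbiguityAverse (𝓐 : Set (Set S)) (X : Set V)
    (R₁ R₂ : (S → V) → (S → V) → Prop) : Prop :=
  ∀ f ∈ Acts 𝓐 X, ∀ x ∈ X, R₂ (constAct x) f → R₁ (constAct x) f

/-- `u₁` and `u₂` are positive affine transformations of each other on `X`. -/
def CardEquiv (X : Set V) (u₁ u₂ : V → ℝ) : Prop :=
  ∃ a b : ℝ, 0 < a ∧ ∀ x ∈ X, u₂ x = a * u₁ x + b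

/-- A capacity on `(S, Σ)`. -/
def IsCapacity (𝓐 : Set (Set S)) (π : Set S → ℝ) : Prop :=
  π ∅ = 0 ∧ π Set.univ = 1 ∧ ∀ A ∈ 𝓐, ∀ B ∈ 𝓐, A ⊆ B → π A ≤ π B

/-- The Choquet integral of a (simple) function against a capacity. -/
noncomputable def choquet (π : Set S → ℝ) (φ : S → ℝ) : ℝ :=
  (∫ t in Set.Ioi (0 : ℝ), π {s | t ≤ φ s}) +
    ∫ t in Set.Iio (0 : ℝ), (π {s | t ≤ φ s} - 1)

/-! ### Auxiliary lemmas -/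

section Aux

variable {𝓐 : Set (Set S)}

theorem IsSetAlg.univ_mem (hA : IsSetAlg 𝓐) : Set.univ ∈ 𝓐 := by
  simpa using hA.compl_mem ∅ hA.empty_mem

theorem IsSetAlg.inter_mem (hA : IsSetAlg 𝓐) {A B : Set S} (h1 : A ∈ 𝓐) (h2 : B ∈ 𝓐) :
    A ∩ B ∈ 𝓐 := by
  have := hA.compl_mem _ (hA.union_mem _ (hA.compl_mem A h1) _ (hA.compl_mem B h2))
  simpa [Set.compl_union] using this

theorem IsSetAlg.biUnion_mem (hA : IsSetAlg 𝓐) {ι : Type*} (t : Finset ι) (A : ι → Set S)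
    (h : ∀ i ∈ t, A i ∈ 𝓐) : (⋃ i ∈ t, A i) ∈ 𝓐 := by
  classical
  induction t using Finset.induction_on with
  | empty => simpa using hA.empty_mem
  | @insert a s ha ih =>
    rw [Finset.set_biUnion_insert]
    exact hA.union_mem _ (h a (Finset.mem_insert_self a s)) _
      (ih fun i hi => h i (Finset.mem_insert_of_mem hi))

theorem p_empty (hA : IsSetAlg 𝓐) {p : Set S → ℝ} (hp : p ∈ Δset 𝓐) : p ∅ = 0 := by
  have := hp.2.2.1 ∅ hA.empty_mem ∅ hA.empty_mem (disjoint_bot_left)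
  simp only [Set.union_empty] at this
  linarith

theorem p_mem_Icc (hA : IsSetAlg 𝓐) {p : Set S → ℝ} (hp : p ∈ Δset 𝓐) (A : Set S) :
    p A ∈ Set.Icc (0 : ℝ) 1 := by
  by_cases hmem : A ∈ 𝓐
  · have h1 : p (A ∪ Aᶜ) = p A + p Aᶜ :=
      hp.2.2.1 A hmem Aᶜ (hA.compl_mem A hmem) disjoint_compl_right
    rw [Set.union_compl_self, hp.1] at h1
    have h2 : 0 ≤ p A := hp.2.1 A hmem
    have h3 : 0 ≤ p Aᶜ := hp.2.1 Aᶜ (hA.compl_mem A hmem)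
    exact ⟨h2, by linarith⟩
  · rw [hp.2.2.2 A hmem]; exact ⟨le_refl _, zero_le_one⟩

theorem p_biUnion (hA : IsSetAlg 𝓐) {p : Set S → ℝ} (hp : p ∈ Δset 𝓐)
    {ι : Type*} (t : Finset ι) (A : ι → Set S) (hmem : ∀ i ∈ t, A i ∈ 𝓐)
    (hdis : ∀ i ∈ t, ∀ j ∈ t, i ≠ j → Disjoint (A i) (A j)) :
    p (⋃ i ∈ t, A i) = ∑ i ∈ t, p (A i) := by
  classical
  induction t using Finset.induction_on with
  | empty => simpa using p_empty hA hp
  | @insert a s ha ih =>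
    rw [Finset.set_biUnion_insert, Finset.sum_insert ha]
    have hmem' : ∀ i ∈ s, A i ∈ 𝓐 := fun i hi => hmem i (Finset.mem_insert_of_mem hi)
    have hdis' : ∀ i ∈ s, ∀ j ∈ s, i ≠ j → Disjoint (A i) (A j) := fun i hi j hj =>
      hdis i (Finset.mem_insert_of_mem hi) j (Finset.mem_insert_of_mem hj)
    have hd : Disjoint (A a) (⋃ i ∈ s, A i) := by
      rw [Set.disjoint_iUnion₂_right]
      intro i hi
      exact hdis a (Finset.mem_insert_self a s) i (Finset.mem_insert_of_mem hi)
        (by rintro rfl; exact ha hi)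
    rw [hp.2.2.1 _ (hmem a (Finset.mem_insert_self a s)) _ (hA.biUnion_mem s A hmem') hd,
      ih hmem' hdis']

theorem Δset_convex (hA : IsSetAlg 𝓐) {p q : Set S → ℝ} (hp : p ∈ Δset 𝓐) (hq : q ∈ Δset 𝓐)
    {a b : ℝ} (ha : 0 ≤ a) (hb : 0 ≤ b) (hab : a + b = 1) : a • p + b • q ∈ Δset 𝓐 := by
  have happ : ∀ A : Set S, (a • p + b • q) A = a * p A + b * q A := fun A => rfl
  refine ⟨?_, ?_, ?_, ?_⟩
  · rw [happ, hp.1, hq.1]; linarith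
  · intro A hAm
    rw [happ]
    exact add_nonneg (mul_nonneg ha (hp.2.1 A hAm)) (mul_nonneg hb (hq.2.1 A hAm))
  · intro A hAm B hBm hd
    rw [happ, happ, happ, hp.2.2.1 A hAm B hBm hd, hq.2.2.1 A hAm B hBm hd]; ring
  · intro A hAm
    rw [happ, hp.2.2.2 A hAm, hq.2.2.2 A hAm]; ring

theorem isSimpleFn_const (hA : IsSetAlg 𝓐) (k : ℝ) : IsSimpleFn 𝓐 (fun _ : S => k) := by
  constructor
  · exact (Set.finite_singleton k).subset Set.range_const_subset
  · intro t
    rcases eq_or_ne k t with rfl | h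
    · have : (fun _ : S => k) ⁻¹' {k} = Set.univ := by ext s; simp
      rw [this]; exact hA.univ_mem
    · have : (fun _ : S => k) ⁻¹' {t} = ∅ := by ext s; simp [h]
      rw [this]; exact hA.empty_mem

theorem IsSimpleFn.const_mul (hA : IsSetAlg 𝓐) {φ : S → ℝ} (hφ : IsSimpleFn 𝓐 φ) (c : ℝ) :
    IsSimpleFn 𝓐 (fun s => c * φ s) := by
  rcases eq_or_ne c 0 with rfl | hc
  · simpa using isSimpleFn_const hA (0 : ℝ)
  constructor
  · have hsub : Set.range (fun s => c * φ s) ⊆ (fun t => c * t) '' Set.range φ := by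
      rintro _ ⟨s, rfl⟩; exact ⟨φ s, ⟨s, rfl⟩, rfl⟩
    exact (hφ.1.image _).subset hsub
  · intro t
    have : (fun s => c * φ s) ⁻¹' {t} = φ ⁻¹' {t / c} := by
      ext s
      simp only [Set.mem_preimage, Set.mem_singleton_iff]
      rw [eq_div_iff hc, mul_comm]
    rw [this]; exact hφ.2 _

theorem IsSimpleFn.add (hA : IsSetAlg 𝓐) {φ ψ : S → ℝ} (hφ : IsSimpleFn 𝓐 φ)
    (hψ : IsSimpleFn 𝓐 ψ) : IsSimpleFn 𝓐 (fun s => φ s + ψ s) := by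
  classical
  constructor
  · have hsub : Set.range (fun s => φ s + ψ s)
        ⊆ Set.image2 (· + ·) (Set.range φ) (Set.range ψ) := by
      rintro _ ⟨s, rfl⟩; exact ⟨φ s, ⟨s, rfl⟩, ψ s, ⟨s, rfl⟩, rfl⟩
    exact (Set.Finite.image2 _ hφ.1 hψ.1).subset hsub
  · intro t
    have : (fun s => φ s + ψ s) ⁻¹' {t}
        = ⋃ a ∈ hφ.1.toFinset, (φ ⁻¹' {a} ∩ ψ ⁻¹' {t - a}) := by
      ext s
      simp only [Set.mem_preimage, Set.mem_singleton_iff, Set.mem_iUnion, Set.mem_inter_iff,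
        Set.Finite.mem_toFinset, exists_prop]
      constructor
      · intro h
        exact ⟨φ s, ⟨s, rfl⟩, rfl, by linarith⟩
      · rintro ⟨a, _, rfl, h2⟩
        linarith
    rw [this]
    exact hA.biUnion_mem _ _ fun a _ => hA.inter_mem (hφ.2 a) (hψ.2 (t - a))

theorem isSimpleFn_sum (hA : IsSetAlg 𝓐) {ι : Type*} (t : Finset ι) (μ : ι → ℝ)
    (φ : ι → S → ℝ) (hφ : ∀ i ∈ t, IsSimpleFn 𝓐 (φ i)) :
    IsSimpleFn 𝓐 (fun s => ∑ i ∈ t, μ i * φ i s) := by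
  classical
  induction t using Finset.induction_on with
  | empty => simpa using isSimpleFn_const hA (0 : ℝ)
  | @insert a s ha ih =>
    have h1 : IsSimpleFn 𝓐 (fun x => μ a * φ a x) :=
      (hφ a (Finset.mem_insert_self a s)).const_mul hA (μ a)
    have h2 : IsSimpleFn 𝓐 (fun x => ∑ i ∈ s, μ i * φ i x) :=
      ih fun i hi => hφ i (Finset.mem_insert_of_mem hi)
    have := h1.add hA h2
    have e0 : (fun x => ∑ i ∈ insert a s, μ i * φ i x)
        = fun x => μ a * φ a x + ∑ i ∈ s, μ i * φ i x := by
      funext x; rw [Finset.sum_insert ha]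
    rw [e0]; exact this

theorem fint_const [Nonempty S] {p : Set S → ℝ} (hp1 : p Set.univ = 1) (k : ℝ) :
    fint p (fun _ : S => k) = k := by
  have hfin : (Set.range (fun _ : S => k)).Finite :=
    (Set.finite_singleton k).subset Set.range_const_subset
  rw [fint, dif_pos hfin]
  have hr : Set.range (fun _ : S => k) = {k} := Set.range_const
  rw [Finset.sum_eq_single_of_mem k (by rw [Set.Finite.mem_toFinset, hr]; rfl)]
  · have hpre : (fun _ : S => k) ⁻¹' {k} = Set.univ := by ext s; simp
    rw [hpre, hp1, mul_one]
  · intro t ht hne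
    rw [Set.Finite.mem_toFinset, hr] at ht
    exact absurd ht hne

/-- Master lemma: evaluating `fint` along any measurable partition on which `φ` is constant. -/
theorem fint_partition (hA : IsSetAlg 𝓐) {p : Set S → ℝ} (hp : p ∈ Δset 𝓐)
    {φ : S → ℝ} (hφ : IsSimpleFn 𝓐 φ) {ι : Type*} (t : Finset ι)
    (B : ι → Set S) (hB : ∀ i ∈ t, B i ∈ 𝓐)
    (hdis : ∀ i ∈ t, ∀ j ∈ t, i ≠ j → Disjoint (B i) (B j))
    (hcov : ∀ s : S, ∃ i ∈ t, s ∈ B i)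
    (v : ι → ℝ) (hv : ∀ i ∈ t, ∀ s ∈ B i, φ s = v i) :
    fint p φ = ∑ i ∈ t, v i * p (B i) := by
  classical
  rw [fint, dif_pos hφ.1]
  have key : ∀ c : ℝ, p (φ ⁻¹' {c}) = ∑ i ∈ t.filter (fun i => v i = c), p (B i) := by
    intro c
    have hset : φ ⁻¹' {c} = ⋃ i ∈ t.filter (fun i => v i = c), B i := by
      ext s
      simp only [Set.mem_preimage, Set.mem_singleton_iff, Set.mem_iUnion, exists_prop,
        Finset.mem_filter]
      constructor
      · intro h
        obtain ⟨i, hi, hsi⟩ := hcov s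
        exact ⟨i, ⟨hi, (hv i hi s hsi) ▸ h⟩, hsi⟩
      · rintro ⟨i, ⟨hi, rfl⟩, hsi⟩
        exact hv i hi s hsi
    rw [hset, p_biUnion hA hp _ _ (fun i hi => hB i (Finset.mem_filter.1 hi).1)
      (fun i hi j hj hne => hdis i (Finset.mem_filter.1 hi).1 j (Finset.mem_filter.1 hj).1 hne)]
  have h1 : ∀ c ∈ hφ.1.toFinset, c * p (φ ⁻¹' {c})
      = ∑ i ∈ t.filter (fun i => v i = c), v i * p (B i) := by
    intro c hc
    rw [key c, Finset.mul_sum]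
    exact Finset.sum_congr rfl fun i hi => by rw [(Finset.mem_filter.1 hi).2]
  rw [Finset.sum_congr rfl h1]
  have hBempty : ∀ i ∈ t, v i ∉ hφ.1.toFinset → p (B i) = 0 := by
    intro i hi hvi
    have : B i = ∅ := by
      by_contra hne
      obtain ⟨s, hs⟩ := Set.nonempty_iff_ne_empty.2 hne
      exact hvi (by rw [Set.Finite.mem_toFinset]; exact ⟨s, hv i hi s hs⟩)
    rw [this]; exact p_empty hA hp
  have hmap : ∀ i ∈ t.filter (fun i => v i ∈ hφ.1.toFinset), v i ∈ hφ.1.toFinset :=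
    fun i hi => (Finset.mem_filter.1 hi).2
  have h2 := Finset.sum_fiberwise_of_maps_to hmap (fun i => v i * p (B i))
  have h3 : ∀ c ∈ hφ.1.toFinset,
      (t.filter (fun i => v i ∈ hφ.1.toFinset)).filter (fun i => v i = c)
        = t.filter (fun i => v i = c) := by
    intro c hc
    rw [Finset.filter_filter]
    exact Finset.filter_congr fun i _ => by
      constructor
      · exact fun h => h.2
      · exact fun h => ⟨h ▸ hc, h⟩
  calc ∑ c ∈ hφ.1.toFinset, ∑ i ∈ t.filter (fun i => v i = c), v i * p (B i)
      = ∑ c ∈ hφ.1.toFinset,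
          ∑ i ∈ (t.filter (fun i => v i ∈ hφ.1.toFinset)).filter (fun i => v i = c),
            v i * p (B i) := by
        exact Finset.sum_congr rfl fun c hc => by rw [h3 c hc]
    _ = ∑ i ∈ t.filter (fun i => v i ∈ hφ.1.toFinset), v i * p (B i) := h2
    _ = ∑ i ∈ t, v i * p (B i) := by
        refine Finset.sum_subset (Finset.filter_subset _ _) ?_
        intro i hi hni
        have : v i ∉ hφ.1.toFinset := by
          intro hmem
          exact hni (Finset.mem_filter.2 ⟨hi, hmem⟩)
        rw [hBempty i hi this, mul_zero]

theorem fint_add (hA : IsSetAlg 𝓐) {p : Set S → ℝ} (hp : p ∈ Δset 𝓐) {φ ψ : S → ℝ}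
    (hφ : IsSimpleFn 𝓐 φ) (hψ : IsSimpleFn 𝓐 ψ) :
    fint p (fun s => φ s + ψ s) = fint p φ + fint p ψ := by
  classical
  set F := hφ.1.toFinset ×ˢ hψ.1.toFinset with hF
  set B : ℝ × ℝ → Set S := fun ab => φ ⁻¹' {ab.1} ∩ ψ ⁻¹' {ab.2} with hBdef
  have hB : ∀ ab ∈ F, B ab ∈ 𝓐 := fun ab _ => hA.inter_mem (hφ.2 _) (hψ.2 _)
  have hdis : ∀ ab ∈ F, ∀ cd ∈ F, ab ≠ cd → Disjoint (B ab) (B cd) := by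
    intro ab _ cd _ hne
    rw [Set.disjoint_left]
    rintro s ⟨h1, h2⟩ ⟨h3, h4⟩
    apply hne
    have e1 : ab.1 = cd.1 := by
      have := (Set.mem_singleton_iff.1 h1).symm.trans (Set.mem_singleton_iff.1 h3)
      exact this
    have e2 : ab.2 = cd.2 := by
      have := (Set.mem_singleton_iff.1 h2).symm.trans (Set.mem_singleton_iff.1 h4)
      exact this
    exact Prod.ext e1 e2
  have hcov : ∀ s : S, ∃ ab ∈ F, s ∈ B ab := by
    intro s
    refine ⟨(φ s, ψ s), ?_, ⟨rfl, rfl⟩⟩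
    rw [hF, Finset.mem_product]
    exact ⟨(Set.Finite.mem_toFinset _).2 ⟨s, rfl⟩, (Set.Finite.mem_toFinset _).2 ⟨s, rfl⟩⟩
  have e1 := fint_partition hA hp hφ F B hB hdis hcov (fun ab => ab.1)
    (fun ab _ s hs => Set.mem_singleton_iff.1 hs.1)
  have e2 := fint_partition hA hp hψ F B hB hdis hcov (fun ab => ab.2)
    (fun ab _ s hs => Set.mem_singleton_iff.1 hs.2)
  have e3 := fint_partition hA hp (hφ.add hA hψ) F B hB hdis hcov (fun ab => ab.1 + ab.2)
    (fun ab _ s hs => by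
      rw [Set.mem_singleton_iff.1 hs.1, Set.mem_singleton_iff.1 hs.2])
  rw [e1, e2, e3, ← Finset.sum_add_distrib]
  exact Finset.sum_congr rfl fun ab _ => by ring

theorem fint_const_mul (hA : IsSetAlg 𝓐) {p : Set S → ℝ} (hp : p ∈ Δset 𝓐) {φ : S → ℝ}
    (hφ : IsSimpleFn 𝓐 φ) (c : ℝ) : fint p (fun s => c * φ s) = c * fint p φ := by
  classical
  have hB : ∀ a ∈ hφ.1.toFinset, φ ⁻¹' {a} ∈ 𝓐 := fun a _ => hφ.2 a
  have hdis : ∀ a ∈ hφ.1.toFinset, ∀ b ∈ hφ.1.toFinset, a ≠ b →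
      Disjoint (φ ⁻¹' {a}) (φ ⁻¹' {b}) := by
    intro a _ b _ hne
    rw [Set.disjoint_left]
    rintro s h1 h2
    exact hne ((Set.mem_singleton_iff.1 h1).symm.trans (Set.mem_singleton_iff.1 h2))
  have hcov : ∀ s : S, ∃ a ∈ hφ.1.toFinset, s ∈ φ ⁻¹' {a} := fun s =>
    ⟨φ s, (Set.Finite.mem_toFinset _).2 ⟨s, rfl⟩, rfl⟩
  have e1 := fint_partition hA hp (hφ.const_mul hA c) hφ.1.toFinset _ hB hdis hcov
    (fun a => c * a) (fun a _ s hs => by rw [Set.mem_singleton_iff.1 hs])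
  have e2 := fint_partition hA hp hφ hφ.1.toFinset _ hB hdis hcov
    (fun a => a) (fun a _ s hs => Set.mem_singleton_iff.1 hs)
  rw [e1, e2, Finset.mul_sum]
  exact Finset.sum_congr rfl fun a _ => by ring

theorem fint_sum [Nonempty S] (hA : IsSetAlg 𝓐) {p : Set S → ℝ} (hp : p ∈ Δset 𝓐)
    {ι : Type*} (t : Finset ι) (μ : ι → ℝ) (φ : ι → S → ℝ)
    (hφ : ∀ i ∈ t, IsSimpleFn 𝓐 (φ i)) :
    fint p (fun s => ∑ i ∈ t, μ i * φ i s) = ∑ i ∈ t, μ i * fint p (φ i) := by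
  classical
  induction t using Finset.induction_on with
  | empty => simpa using fint_const hp.1 (0 : ℝ)
  | @insert a s ha ih =>
    have h2 : IsSimpleFn 𝓐 (fun x => ∑ i ∈ s, μ i * φ i x) :=
      isSimpleFn_sum hA s μ φ fun i hi => hφ i (Finset.mem_insert_of_mem hi)
    have h1 : IsSimpleFn 𝓐 (fun x => μ a * φ a x) :=
      (hφ a (Finset.mem_insert_self a s)).const_mul hA (μ a)
    have e0 : (fun x => ∑ i ∈ insert a s, μ i * φ i x)
        = fun x => (μ a * φ a x) + ∑ i ∈ s, μ i * φ i x := by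
      funext x; rw [Finset.sum_insert ha]
    rw [e0, fint_add hA hp h1 h2, fint_const_mul hA hp (hφ a (Finset.mem_insert_self a s)),
      ih fun i hi => hφ i (Finset.mem_insert_of_mem hi), Finset.sum_insert ha]

theorem abs_fint_le (hA : IsSetAlg 𝓐) {p : Set S → ℝ} (hp : p ∈ Δset 𝓐) {φ : S → ℝ}
    (hφ : IsSimpleFn 𝓐 φ) : |fint p φ| ≤ ∑ t ∈ hφ.1.toFinset, |t| := by
  rw [fint, dif_pos hφ.1]
  refine (Finset.abs_sum_le_sum_abs _ _).trans (Finset.sum_le_sum fun t _ => ?_)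
  rw [abs_mul]
  have h1 := p_mem_Icc hA hp (φ ⁻¹' {t})
  calc |t| * |p (φ ⁻¹' {t})| = |t| * p (φ ⁻¹' {t}) := by rw [abs_of_nonneg h1.1]
    _ ≤ |t| * 1 := mul_le_mul_of_nonneg_left h1.2 (abs_nonneg t)
    _ = |t| := mul_one _

theorem fint_combo (p q : Set S → ℝ) (a b : ℝ) (φ : S → ℝ) :
    fint (a • p + b • q) φ = a * fint p φ + b * fint q φ := by
  by_cases h : (Set.range φ).Finite
  · rw [fint, fint, fint, dif_pos h, dif_pos h, dif_pos h, Finset.mul_sum, Finset.mul_sum,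
      ← Finset.sum_add_distrib]
    refine Finset.sum_congr rfl fun t _ => ?_
    have : (a • p + b • q) (φ ⁻¹' {t}) = a * p (φ ⁻¹' {t}) + b * q (φ ⁻¹' {t}) := rfl
    rw [this]; ring
  · rw [fint, fint, fint, dif_neg h, dif_neg h, dif_neg h]; ring

theorem fint_continuous_pi (φ : S → ℝ) :
    Continuous (fun p : Set S → ℝ => fint p φ) := by
  by_cases h : (Set.range φ).Finite
  · simp only [fint, dif_pos h]
    exact continuous_finset_sum _ fun t _ => continuous_const.mul (continuous_apply _)
  · simp only [fint, dif_neg h]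
    exact continuous_const

theorem fint_continuous_weakStar {φ : S → ℝ} (hφ : IsSimpleFn 𝓐 φ) :
    @Continuous _ _ (weakStar 𝓐) _ (fun p => fint p φ) := by
  letI : TopologicalSpace (Set S → ℝ) := weakStar 𝓐
  have h1 : Continuous
      (fun p : Set S → ℝ => fun ψ : {ψ : S → ℝ // IsSimpleFn 𝓐 ψ} => fint p ψ.1) :=
    continuous_induced_dom
  exact (continuous_apply (⟨φ, hφ⟩ : {ψ : S → ℝ // IsSimpleFn 𝓐 ψ})).comp h1

theorem continuous_id_pi_weakStar (𝓐 : Set (Set S)) :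
    @Continuous (Set S → ℝ) (Set S → ℝ) Pi.topologicalSpace (weakStar 𝓐) id := by
  exact continuous_induced_rng.2 (continuous_pi fun ψ => fint_continuous_pi ψ.1)

theorem isClosed_Δset_pi (𝓐 : Set (Set S)) : IsClosed (Δset 𝓐) := by
  have hrw : Δset 𝓐 = {p : Set S → ℝ | p Set.univ = 1} ∩
      ((⋂ A ∈ 𝓐, {p : Set S → ℝ | 0 ≤ p A}) ∩
       ((⋂ A ∈ 𝓐, ⋂ B ∈ 𝓐, {p : Set S → ℝ | Disjoint A B → p (A ∪ B) = p A + p B}) ∩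
        (⋂ A ∈ {A : Set S | A ∉ 𝓐}, {p : Set S → ℝ | p A = 0}))) := by
    ext p
    simp only [Δset, Set.mem_setOf_eq, Set.mem_inter_iff, Set.mem_iInter]
    try tauto
  rw [hrw]
  refine (isClosed_eq (continuous_apply _) continuous_const).inter (IsClosed.inter ?_
    (IsClosed.inter ?_ ?_))
  · exact isClosed_biInter fun A _ => isClosed_le continuous_const (continuous_apply _)
  · refine isClosed_biInter fun A _ => isClosed_biInter fun B _ => ?_
    by_cases hd : Disjoint A B
    · simp only [hd, forall_true_left]
      exact isClosed_eq (continuous_apply (A ∪ B)) ((continuous_apply A).add (continuous_apply B))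
    · have : {p : Set S → ℝ | Disjoint A B → p (A ∪ B) = p A + p B} = Set.univ := by
        ext p; simp [hd]
      rw [this]; exact isClosed_univ
  · exact isClosed_biInter fun A _ => isClosed_eq (continuous_apply _) continuous_const

theorem isCompact_Δset (hA : IsSetAlg 𝓐) : @IsCompact _ (weakStar 𝓐) (Δset 𝓐) := by
  have hsub : Δset 𝓐 ⊆ Set.pi Set.univ (fun _ : Set S => Set.Icc (0 : ℝ) 1) := by
    intro p hp A _
    exact p_mem_Icc hA hp A
  have hcomp : IsCompact (Δset 𝓐) :=
    IsCompact.of_isClosed_subset (isCompact_univ_pi fun _ => isCompact_Icc)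
      (isClosed_Δset_pi 𝓐) hsub
  have himg := @IsCompact.image _ _ Pi.topologicalSpace (weakStar 𝓐) _ id hcomp
    (continuous_id_pi_weakStar 𝓐)
  rwa [Set.image_id] at himg

theorem ereal_le_of_forall_lt_add {x y : EReal} (h : ∀ δ : ℝ, 0 < δ → x ≤ y + (δ : EReal)) :
    x ≤ y := by
  by_contra hcon
  push_neg at hcon
  rcases eq_or_ne y ⊥ with rfl | hyb
  · have h1 := h 1 one_pos
    rw [EReal.bot_add] at h1
    exact absurd (h1.trans_lt hcon) (lt_irrefl x)
  · have hyt : y ≠ ⊤ := ne_top_of_lt hcon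
    obtain ⟨z, hz1, hz2⟩ := EReal.exists_between_coe_real hcon
    have hyr : ((y.toReal : ℝ) : EReal) = y := EReal.coe_toReal hyt hyb
    have hlt : y.toReal < z := by
      rw [← EReal.coe_lt_coe_iff, hyr]; exact hz1
    have h2 := h (z - y.toReal) (by linarith)
    have h3 : y + ((z - y.toReal : ℝ) : EReal) = (z : EReal) := by
      rw [← hyr, ← EReal.coe_add]
      congr 1
      rw [EReal.toReal_coe]
      ring
    rw [h3] at h2
    exact absurd (h2.trans_lt hz2) (lt_irrefl x)

section Aux2

variable {𝓐 : Set (Set S)} {c₀ : (Set S → ℝ) → EReal}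

theorem Δset_nonempty_of (hgr : (⨅ p ∈ Δset 𝓐, c₀ p) = 0) : (Δset 𝓐).Nonempty := by
  by_contra h
  rw [Set.not_nonempty_iff_eq_empty] at h
  rw [h, iInf_emptyset] at hgr
  exact absurd hgr (by simp)

theorem c₀_nonneg (hgr : (⨅ p ∈ Δset 𝓐, c₀ p) = 0) {q : Set S → ℝ} (hq : q ∈ Δset 𝓐) :
    (0 : EReal) ≤ c₀ q := by
  rw [← hgr]; exact iInf₂_le q hq

theorem exists_c₀_lt (hgr : (⨅ p ∈ Δset 𝓐, c₀ p) = 0) {ε : EReal} (hε : 0 < ε) :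
    ∃ q ∈ Δset 𝓐, c₀ q < ε := by
  have h1 : (⨅ p ∈ Δset 𝓐, c₀ p) < ε := by rw [hgr]; exact hε
  obtain ⟨q, hq⟩ := iInf_lt_iff.1 h1
  obtain ⟨hqΔ, hlt⟩ := iInf_lt_iff.1 hq
  exact ⟨q, hqΔ, hlt⟩

theorem minVal_const [Nonempty S] (hgr : (⨅ p ∈ Δset 𝓐, c₀ p) = 0) (k : ℝ) :
    minVal 𝓐 c₀ (fun _ : S => k) = (k : EReal) := by
  apply le_antisymm
  · by_contra hcon
    push_neg at hcon
    obtain ⟨y, hky, hylt⟩ := EReal.exists_between_coe_real hcon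
    have hyk : (0 : EReal) < ((y - k : ℝ) : EReal) := by
      rw [← EReal.coe_zero, EReal.coe_lt_coe_iff]
      rw [EReal.coe_lt_coe_iff] at hky
      linarith
    obtain ⟨q, hqΔ, hlt⟩ := exists_c₀_lt hgr hyk
    have h1 : minVal 𝓐 c₀ (fun _ : S => k) ≤ (fint q (fun _ : S => k) : EReal) + c₀ q :=
      iInf₂_le q hqΔ
    rw [fint_const hqΔ.1 k] at h1
    have h2 : (k : EReal) + c₀ q < (k : EReal) + ((y - k : ℝ) : EReal) :=
      EReal.add_lt_add_left_coe hlt k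
    rw [← EReal.coe_add] at h2
    have h3 : k + (y - k) = y := by ring
    rw [h3] at h2
    exact absurd ((h1.trans_lt h2).trans hylt) (lt_irrefl _)
  · refine le_iInf₂ fun p hp => ?_
    rw [fint_const hp.1 k]
    calc (k : EReal) = (k : EReal) + 0 := (add_zero _).symm
      _ ≤ (k : EReal) + c₀ p := add_le_add_right (c₀_nonneg hgr hp) _

theorem minVal_ne_bot [Nonempty S] (hA : IsSetAlg 𝓐)
    (hgr : (⨅ p ∈ Δset 𝓐, c₀ p) = 0) {φ : S → ℝ} (hφ : IsSimpleFn 𝓐 φ) :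
    minVal 𝓐 c₀ φ ≠ ⊥ := by
  set M : ℝ := ∑ t ∈ hφ.1.toFinset, |t| with hM
  have hlb : ((-M : ℝ) : EReal) ≤ minVal 𝓐 c₀ φ := by
    refine le_iInf₂ fun p hp => ?_
    have h1 : ((-M : ℝ) : EReal) ≤ (fint p φ : EReal) := by
      rw [EReal.coe_le_coe_iff]
      have := (abs_le.1 (abs_fint_le hA hp hφ)).1
      linarith
    calc ((-M : ℝ) : EReal) ≤ (fint p φ : EReal) := h1
      _ = (fint p φ : EReal) + 0 := (add_zero _).symm
      _ ≤ (fint p φ : EReal) + c₀ p := add_le_add_right (c₀_nonneg hgr hp) _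
  intro h
  rw [h] at hlb
  exact absurd hlb (EReal.bot_lt_coe _).not_ge

theorem minVal_ne_top [Nonempty S]
    (hgr : (⨅ p ∈ Δset 𝓐, c₀ p) = 0) (φ : S → ℝ) : minVal 𝓐 c₀ φ ≠ ⊤ := by
  obtain ⟨q, hqΔ, hlt⟩ := exists_c₀_lt hgr (by norm_num : (0 : EReal) < 1)
  have hub : minVal 𝓐 c₀ φ ≤ (fint q φ : EReal) + c₀ q := iInf₂_le q hqΔ
  intro h
  rw [h] at hub
  have hfin : (fint q φ : EReal) + c₀ q < ⊤ :=
    EReal.add_lt_top (EReal.coe_ne_top _) (hlt.trans (EReal.coe_lt_top 1)).ne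
  exact absurd (top_le_iff.1 hub) hfin.ne

theorem minVal_coe_toReal [Nonempty S] (hA : IsSetAlg 𝓐)
    (hgr : (⨅ p ∈ Δset 𝓐, c₀ p) = 0) {φ : S → ℝ} (hφ : IsSimpleFn 𝓐 φ) :
    (((minVal 𝓐 c₀ φ).toReal : ℝ) : EReal) = minVal 𝓐 c₀ φ :=
  EReal.coe_toReal (minVal_ne_top hgr φ) (minVal_ne_bot hA hgr hφ)

/-- The key real inequality: `minVal c₀ φ ≤ fint p φ + c₀ p` in real form. -/
theorem minVal_toReal_le [Nonempty S] (hA : IsSetAlg 𝓐)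
    (hgr : (⨅ p ∈ Δset 𝓐, c₀ p) = 0) {φ : S → ℝ} (hφ : IsSimpleFn 𝓐 φ)
    {p : Set S → ℝ} (hp : p ∈ Δset 𝓐) {γ : ℝ} (hγ : c₀ p = (γ : EReal)) :
    (minVal 𝓐 c₀ φ).toReal ≤ fint p φ + γ := by
  have h1 : minVal 𝓐 c₀ φ ≤ (fint p φ : EReal) + c₀ p := iInf₂_le p hp
  rw [hγ, ← EReal.coe_add, ← minVal_coe_toReal hA hgr hφ, EReal.coe_le_coe_iff] at h1
  exact h1

/-- Superadditivity (concavity) of the value functional along convex combinations. -/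
theorem minVal_concave [Nonempty S] (hA : IsSetAlg 𝓐) (hc₀ : c₀ ∈ Cscr 𝓐)
    (hgr : (⨅ p ∈ Δset 𝓐, c₀ p) = 0) {ι : Type*} [Fintype ι]
    (μ : ι → ℝ) (hμ0 : ∀ i, 0 ≤ μ i) (hμ1 : ∑ i, μ i = 1)
    (φ : ι → S → ℝ) (hsim : ∀ i, IsSimpleFn 𝓐 (φ i)) :
    ∑ i, μ i * (minVal 𝓐 c₀ (φ i)).toReal
      ≤ (minVal 𝓐 c₀ (fun s => ∑ i, μ i * φ i s)).toReal := by
  classical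
  have hψ : IsSimpleFn 𝓐 (fun s => ∑ i, μ i * φ i s) :=
    isSimpleFn_sum hA Finset.univ μ φ fun i _ => hsim i
  have key : ((∑ i, μ i * (minVal 𝓐 c₀ (φ i)).toReal : ℝ) : EReal)
      ≤ minVal 𝓐 c₀ (fun s => ∑ i, μ i * φ i s) := by
    refine le_iInf₂ fun q hq => ?_
    rcases eq_or_ne (c₀ q) ⊤ with htop | hne
    · rw [htop, EReal.add_top_of_ne_bot (EReal.coe_ne_bot _)]
      exact le_top
    · have hbot : c₀ q ≠ ⊥ := (hc₀.1 q hq).ne'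
      set γ := (c₀ q).toReal with hγdef
      have hγ : c₀ q = (γ : EReal) := (EReal.coe_toReal hne hbot).symm
      have hterm : ∀ i, (minVal 𝓐 c₀ (φ i)).toReal ≤ fint q (φ i) + γ := fun i =>
        minVal_toReal_le hA hgr (hsim i) hq hγ
      have hreal : ∑ i, μ i * (minVal 𝓐 c₀ (φ i)).toReal
          ≤ fint q (fun s => ∑ i, μ i * φ i s) + γ := by
        rw [fint_sum hA hq Finset.univ μ φ fun i _ => hsim i]
        have h2 : ∑ i, μ i * (minVal 𝓐 c₀ (φ i)).toReal
            ≤ ∑ i, μ i * (fint q (φ i) + γ) :=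
          Finset.sum_le_sum fun i _ => mul_le_mul_of_nonneg_left (hterm i) (hμ0 i)
        calc ∑ i, μ i * (minVal 𝓐 c₀ (φ i)).toReal
            ≤ ∑ i, μ i * (fint q (φ i) + γ) := h2
          _ = ∑ i, μ i * fint q (φ i) + (∑ i, μ i) * γ := by
              rw [Finset.sum_mul, ← Finset.sum_add_distrib]
              exact Finset.sum_congr rfl fun i _ => by ring
          _ = ∑ i, μ i * fint q (φ i) + γ := by rw [hμ1, one_mul]
      rw [hγ, ← EReal.coe_add]
      exact EReal.coe_le_coe_iff.2 hreal
  rw [← minVal_coe_toReal hA hgr hψ] at key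
  exact EReal.coe_le_coe_iff.1 key

end Aux2

section Aux3

variable {𝓐 : Set (Set S)} {X : Set V} {u : V → ℝ}

theorem constAct_mem (hA : IsSetAlg 𝓐) {x : V} (hx : x ∈ X) :
    constAct x ∈ Acts 𝓐 X := by
  refine ⟨fun _ => hx, (Set.finite_singleton x).subset Set.range_const_subset, fun v => ?_⟩
  rcases eq_or_ne x v with rfl | h
  · have : constAct (S := S) x ⁻¹' {x} = Set.univ := by ext s; simp [constAct]
    rw [this]; exact hA.univ_mem
  · have : constAct (S := S) x ⁻¹' {v} = ∅ := by ext s; simp [constAct, h]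
    rw [this]; exact hA.empty_mem

theorem uAct_simple (hA : IsSetAlg 𝓐) {f : S → V} (hf : f ∈ Acts 𝓐 X) :
    IsSimpleFn 𝓐 (uAct u f) ∧ ∀ s, uAct u f s ∈ u '' X := by
  classical
  obtain ⟨hfX, hfin, hmeas⟩ := hf
  refine ⟨⟨?_, ?_⟩, fun s => ⟨f s, hfX s, rfl⟩⟩
  · have hsub : Set.range (uAct u f) ⊆ u '' Set.range f := by
      rintro _ ⟨s, rfl⟩; exact ⟨f s, ⟨s, rfl⟩, rfl⟩
    exact (hfin.image u).subset hsub
  · intro t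
    have : uAct u f ⁻¹' {t} = ⋃ v ∈ hfin.toFinset.filter (fun v => u v = t), f ⁻¹' {v} := by
      ext s
      simp only [Set.mem_preimage, Set.mem_singleton_iff, Set.mem_iUnion, Finset.mem_filter,
        Set.Finite.mem_toFinset, exists_prop, uAct]
      constructor
      · intro h; exact ⟨f s, ⟨⟨s, rfl⟩, h⟩, rfl⟩
      · rintro ⟨v, ⟨_, hv⟩, rfl⟩; exact hv
    rw [this]
    exact hA.biUnion_mem _ _ fun v _ => hmeas v

theorem exists_act (hA : IsSetAlg 𝓐) (hX : X.Nonempty)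
    {φ : S → ℝ} (hφ : IsSimpleFn 𝓐 φ) (hval : ∀ s, φ s ∈ u '' X) :
    ∃ f ∈ Acts 𝓐 X, uAct u f = φ := by
  classical
  obtain ⟨x₀, hx₀⟩ := hX
  have hg : ∀ t : ℝ, ∃ x : V, t ∈ u '' X → x ∈ X ∧ u x = t := by
    intro t
    by_cases h : t ∈ u '' X
    · obtain ⟨x, hx1, hx2⟩ := h; exact ⟨x, fun _ => ⟨hx1, hx2⟩⟩
    · exact ⟨x₀, fun h' => absurd h' h⟩
  choose g hgspec using hg
  refine ⟨fun s => g (φ s), ⟨fun s => (hgspec (φ s) (hval s)).1, ?_, ?_⟩, ?_⟩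
  · have hsub : Set.range (fun s => g (φ s)) ⊆ g '' Set.range φ := by
      rintro _ ⟨s, rfl⟩; exact ⟨φ s, ⟨s, rfl⟩, rfl⟩
    exact (hφ.1.image g).subset hsub
  · intro v
    have : (fun s => g (φ s)) ⁻¹' {v}
        = ⋃ t ∈ hφ.1.toFinset.filter (fun t => g t = v), φ ⁻¹' {t} := by
      ext s
      simp only [Set.mem_preimage, Set.mem_singleton_iff, Set.mem_iUnion, Finset.mem_filter,
        Set.Finite.mem_toFinset, exists_prop]
      constructor
      · intro h; exact ⟨φ s, ⟨⟨s, rfl⟩, h⟩, rfl⟩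
      · rintro ⟨t, ⟨_, ht⟩, rfl⟩; exact ht
    rw [this]
    exact hA.biUnion_mem _ _ fun t _ => hφ.2 t
  · funext s
    exact (hgspec (φ s) (hval s)).2

end Aux3

section Sep

variable {𝓐 : Set (Set S)} {c₀ b : (Set S → ℝ) → EReal} {T : Set ℝ}

/-- Pointwise consequence of membership in `B*`. -/
theorem Hprime [Nonempty S] (hA : IsSetAlg 𝓐) (hb : b ∈ Cscr 𝓐)
    (hgr : (⨅ p ∈ Δset 𝓐, c₀ p) = 0)
    (H : ∀ φ : S → ℝ, IsSimpleFn 𝓐 φ → (∀ s, φ s ∈ T) → minVal 𝓐 c₀ φ ≤ maxVal 𝓐 b φ)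
    {ψ : S → ℝ} (hs : IsSimpleFn 𝓐 ψ) (hv : ∀ s, ψ s ∈ T) {δ : ℝ} (hδ : 0 < δ) :
    ∃ q ∈ Δset 𝓐, b q ≠ ⊤ ∧
      (b q).toReal + (minVal 𝓐 c₀ ψ).toReal - fint q ψ < δ := by
  have h1 : ((((minVal 𝓐 c₀ ψ).toReal - δ : ℝ)) : EReal) < maxVal 𝓐 b ψ := by
    refine lt_of_lt_of_le ?_ (H ψ hs hv)
    conv_rhs => rw [← minVal_coe_toReal hA hgr hs]
    rw [EReal.coe_lt_coe_iff]
    linarith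
  rw [maxVal] at h1
  obtain ⟨q, hq⟩ := lt_iSup_iff.1 h1
  obtain ⟨hqΔ, hlt⟩ := lt_iSup_iff.1 hq
  have hbtop : b q ≠ ⊤ := by
    intro htop
    rw [htop, EReal.sub_top] at hlt
    exact absurd hlt (EReal.bot_lt_coe _).not_gt
  have hbbot : b q ≠ ⊥ := (hb.1 q hqΔ).ne'
  refine ⟨q, hqΔ, hbtop, ?_⟩
  rw [← EReal.coe_toReal hbtop hbbot, ← EReal.coe_sub, EReal.coe_lt_coe_iff] at hlt
  linarith

/-- The finite-dimensional separation step. -/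
theorem finite_sep [Nonempty S] (hA : IsSetAlg 𝓐) (hc₀ : c₀ ∈ Cscr 𝓐) (hb : b ∈ Cscr 𝓐)
    (hgr : (⨅ p ∈ Δset 𝓐, c₀ p) = 0) (hT : Convex ℝ T) (h0T : (0 : ℝ) ∈ T)
    (H : ∀ φ : S → ℝ, IsSimpleFn 𝓐 φ → (∀ s, φ s ∈ T) → minVal 𝓐 c₀ φ ≤ maxVal 𝓐 b φ)
    {ε : ℝ} (hε : 0 < ε) {ι : Type*} [Fintype ι] (φ : ι → S → ℝ)
    (hsim : ∀ i, IsSimpleFn 𝓐 (φ i)) (hval : ∀ i s, φ i s ∈ T) :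
    ∃ p ∈ Δset 𝓐, b p ≠ ⊤ ∧
      ∀ i, (b p).toReal + (minVal 𝓐 c₀ (φ i)).toReal - fint p (φ i) ≤ ε := by
  classical
  by_contra hcon
  set k : ι → ℝ := fun i => (minVal 𝓐 c₀ (φ i)).toReal with hk
  set g : (Set S → ℝ) → ι → ℝ := fun p i => (b p).toReal + k i - fint p (φ i) with hgdef
  set D : Set (Set S → ℝ) := {p | p ∈ Δset 𝓐 ∧ b p ≠ ⊤} with hD
  obtain ⟨q₀, hq₀Δ, hq₀top, -⟩ :=
    Hprime hA hb hgr H (isSimpleFn_const hA 0) (fun _ => h0T) one_pos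
  have hq₀D : q₀ ∈ D := ⟨hq₀Δ, hq₀top⟩
  set O : Set (ι → ℝ) := {y | ∃ p ∈ D, ∀ i, g p i < y i} with hO
  have hOopen : IsOpen O := by
    have hOeq : O = ⋃ p ∈ D, Set.pi Set.univ (fun i => Set.Ioi (g p i)) := by
      ext y
      simp only [hO, Set.mem_setOf_eq, Set.mem_iUnion, Set.mem_pi, Set.mem_univ,
        forall_true_left, Set.mem_Ioi, exists_prop]
    rw [hOeq]
    exact isOpen_biUnion fun p _ => isOpen_set_pi Set.finite_univ fun i _ => isOpen_Ioi
  have hbD : ∀ p ∈ D, b p = ((b p).toReal : EReal) := fun p hp =>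
    (EReal.coe_toReal hp.2 ((hb.1 p hp.1).ne')).symm
  have hOconvex : Convex ℝ O := by
    rintro y₁ ⟨p₁, hp₁, hy₁⟩ y₂ ⟨p₂, hp₂, hy₂⟩ a c ha hc hac
    have hΔmem : a • p₁ + c • p₂ ∈ Δset 𝓐 := Δset_convex hA hp₁.1 hp₂.1 ha hc hac
    have hcvx := hb.2.2 p₁ hp₁.1 p₂ hp₂.1 a c ha hc hac
    rw [hbD p₁ hp₁, hbD p₂ hp₂, ← EReal.coe_mul, ← EReal.coe_mul, ← EReal.coe_add] at hcvx
    have hbtop : b (a • p₁ + c • p₂) ≠ ⊤ := by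
      intro htop
      rw [htop] at hcvx
      exact absurd (top_le_iff.1 hcvx) (EReal.coe_ne_top _)
    refine ⟨a • p₁ + c • p₂, ⟨hΔmem, hbtop⟩, fun i => ?_⟩
    have hbne : b (a • p₁ + c • p₂) ≠ ⊥ := (hb.1 _ hΔmem).ne'
    have hbr : (b (a • p₁ + c • p₂)).toReal
        ≤ a * (b p₁).toReal + c * (b p₂).toReal := by
      have h2 := EReal.toReal_le_toReal hcvx hbne (EReal.coe_ne_top _)
      rwa [EReal.toReal_coe] at h2
    have hfint : fint (a • p₁ + c • p₂) (φ i) = a * fint p₁ (φ i) + c * fint p₂ (φ i) :=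
      fint_combo p₁ p₂ a c (φ i)
    have hgle : g (a • p₁ + c • p₂) i ≤ a * g p₁ i + c * g p₂ i := by
      simp only [hgdef]
      rw [hfint]
      have hexp : a * ((b p₁).toReal + k i - fint p₁ (φ i))
          + c * ((b p₂).toReal + k i - fint p₂ (φ i))
          = (a * (b p₁).toReal + c * (b p₂).toReal) + (a + c) * k i
            - (a * fint p₁ (φ i) + c * fint p₂ (φ i)) := by ring
      rw [hexp, hac, one_mul]
      linarith
    have hlt : a * g p₁ i + c * g p₂ i < a * y₁ i + c * y₂ i := by
      rcases eq_or_lt_of_le ha with heq | hapos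
      · have hc1 : c = 1 := by linarith
        rw [← heq, hc1]
        simpa using hy₂ i
      · exact add_lt_add_of_lt_of_le (mul_lt_mul_of_pos_left (hy₁ i) hapos)
          (mul_le_mul_of_nonneg_left (hy₂ i).le hc)
    exact hgle.trans_lt hlt
  have hεO : (fun _ : ι => ε) ∉ O := by
    rintro ⟨p, hpD, hpy⟩
    exact hcon ⟨p, hpD.1, hpD.2, fun i => (hpy i).le⟩
  obtain ⟨f, hf⟩ := geometric_hahn_banach_open_point hOconvex hOopen hεO
  set e : ι → ι → ℝ := fun i => fun j => if i = j then (1 : ℝ) else 0 with he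
  set lam : ι → ℝ := fun i => -f (e i) with hlam
  have hsumf : ∀ y : ι → ℝ, f y = ∑ i, y i * f (e i) := by
    intro y
    conv_lhs => rw [pi_eq_sum_univ y]
    rw [map_sum]
    refine Finset.sum_congr rfl fun i _ => ?_
    rw [show (fun j => if i = j then (1 : ℝ) else 0) = e i from rfl, _root_.map_smul,
      smul_eq_mul]
  have hy₀ : (fun i => g q₀ i + 1) ∈ O := ⟨q₀, hq₀D, fun i => lt_add_one _⟩
  have hlam_nonneg : ∀ i, 0 ≤ lam i := by
    intro i
    show (0 : ℝ) ≤ -f (e i)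
    by_contra hneg
    push_neg at hneg
    have hfe : 0 < f (e i) := by linarith
    set t : ℝ := max ((f (fun _ => ε) - f (fun j => g q₀ j + 1)) / f (e i) + 1) 0 with ht
    have ht0 : 0 ≤ t := le_max_right _ _
    have hmem : ((fun j => g q₀ j + 1) + t • e i) ∈ O := by
      refine ⟨q₀, hq₀D, fun j => ?_⟩
      have h0 : 0 ≤ t * e i j := by
        refine mul_nonneg ht0 ?_
        simp only [he]
        split <;> norm_num
      have happ : ((fun j => g q₀ j + 1) + t • e i) j = g q₀ j + 1 + t * e i j := rfl
      rw [happ]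
      linarith
    have hfval := hf _ hmem
    rw [map_add, _root_.map_smul, smul_eq_mul] at hfval
    have htbig : (f (fun _ => ε) - f (fun j => g q₀ j + 1)) / f (e i) + 1 ≤ t :=
      le_max_left _ _
    have h1 : ((f (fun _ => ε) - f (fun j => g q₀ j + 1)) / f (e i) + 1) * f (e i)
        ≤ t * f (e i) := mul_le_mul_of_nonneg_right htbig hfe.le
    rw [add_mul, div_mul_cancel₀ _ hfe.ne', one_mul] at h1
    linarith
  set sl : ℝ := ∑ i, lam i with hsl
  have hspos : 0 < sl := by
    rcases lt_or_ge 0 sl with h | hle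
    · exact h
    · exfalso
      have hsum0 : sl = 0 := le_antisymm hle (Finset.sum_nonneg fun i _ => hlam_nonneg i)
      have hzero : ∀ i ∈ Finset.univ, lam i = 0 :=
        (Finset.sum_eq_zero_iff_of_nonneg (fun i _ => hlam_nonneg i)).1 hsum0
      have hfzero : ∀ y : ι → ℝ, f y = 0 := by
        intro y
        rw [hsumf y]
        refine Finset.sum_eq_zero fun i _ => ?_
        have h3 : -f (e i) = 0 := hzero i (Finset.mem_univ i)
        have h4 : f (e i) = 0 := by linarith
        rw [h4, mul_zero]
      have h4 := hf _ hy₀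
      rw [hfzero, hfzero] at h4
      exact lt_irrefl 0 h4
  have hkey : ∀ p ∈ D, ε * sl ≤ ∑ i, lam i * g p i := by
    intro p hpD
    by_contra hlt2
    push_neg at hlt2
    set δ : ℝ := (ε * sl - ∑ i, lam i * g p i) / sl with hδdef
    have hδpos : 0 < δ := div_pos (by linarith) hspos
    have hyO : (fun i => g p i + δ) ∈ O :=
      ⟨p, hpD, fun i => by show g p i < g p i + δ; linarith⟩
    have hfval := hf _ hyO
    rw [hsumf (fun i => g p i + δ), hsumf (fun _ => ε)] at hfval
    beta_reduce at hfval
    have hfe : ∀ i, f (e i) = -lam i := fun i => (neg_neg _).symm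
    have h2 : ∑ i, (g p i + δ) * f (e i)
        = -(∑ i, lam i * g p i) + (-δ) * sl := by
      calc ∑ i, (g p i + δ) * f (e i)
          = ∑ i, (-(lam i * g p i) + (-δ) * lam i) :=
            Finset.sum_congr rfl fun i _ => by rw [hfe i]; ring
        _ = -(∑ i, lam i * g p i) + (-δ) * sl := by
            rw [Finset.sum_add_distrib, Finset.sum_neg_distrib, ← Finset.mul_sum, ← hsl]
    have h3 : ∑ i, ε * f (e i) = -(ε * sl) := by
      calc ∑ i, ε * f (e i) = ∑ i, -(ε * lam i) :=
            Finset.sum_congr rfl fun i _ => by rw [hfe i]; ring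
        _ = -(ε * sl) := by rw [Finset.sum_neg_distrib, ← Finset.mul_sum, ← hsl]
    rw [h2, h3] at hfval
    have hδs : δ * sl = ε * sl - ∑ i, lam i * g p i := by
      rw [hδdef, div_mul_cancel₀ _ hspos.ne']
    nlinarith [hfval, hδs]
  set μ : ι → ℝ := fun i => lam i / sl with hμ
  have hμ0 : ∀ i, 0 ≤ μ i := fun i => div_nonneg (hlam_nonneg i) hspos.le
  have hμ1 : ∑ i, μ i = 1 := by
    rw [hμ]
    rw [← Finset.sum_div, ← hsl]
    exact div_self hspos.ne'
  set ψ : S → ℝ := fun s => ∑ i, μ i * φ i s with hψ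
  have hψsim : IsSimpleFn 𝓐 ψ := isSimpleFn_sum hA Finset.univ μ φ fun i _ => hsim i
  have hψval : ∀ s, ψ s ∈ T := by
    intro s
    have := hT.sum_mem (t := Finset.univ) (fun i _ => hμ0 i) hμ1 (fun i _ => hval i s)
    simpa [hψ, smul_eq_mul] using this
  obtain ⟨q, hqΔ, hqtop, hqlt⟩ := Hprime hA hb hgr H hψsim hψval (half_pos hε)
  have hqD : q ∈ D := ⟨hqΔ, hqtop⟩
  have hconc : ∑ i, μ i * k i ≤ (minVal 𝓐 c₀ ψ).toReal :=
    minVal_concave hA hc₀ hgr μ hμ0 hμ1 φ hsim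
  have hfψ : fint q ψ = ∑ i, μ i * fint q (φ i) :=
    fint_sum hA hqΔ Finset.univ μ φ fun i _ => hsim i
  have hsum_g : ∑ i, lam i * g q i
      = sl * ((b q).toReal + (∑ i, μ i * k i) - fint q ψ) := by
    calc ∑ i, lam i * g q i = ∑ i, sl * (μ i * g q i) := by
          refine Finset.sum_congr rfl fun i _ => ?_
          rw [hμ]
          dsimp only
          rw [← mul_assoc, mul_comm sl (lam i / sl), div_mul_cancel₀ _ hspos.ne']
      _ = sl * ∑ i, μ i * g q i := by rw [Finset.mul_sum]
      _ = sl * ((b q).toReal + (∑ i, μ i * k i) - fint q ψ) := by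
          congr 1
          have hexp : ∀ i, μ i * g q i
              = μ i * (b q).toReal + μ i * k i - μ i * fint q (φ i) := fun i => by
            rw [hgdef]; ring
          rw [Finset.sum_congr rfl fun i _ => hexp i, Finset.sum_sub_distrib,
            Finset.sum_add_distrib, ← Finset.sum_mul, hμ1, one_mul, hfψ]
  have hlast : sl * ((b q).toReal + (∑ i, μ i * k i) - fint q ψ) < sl * (ε / 2) := by
    refine mul_lt_mul_of_pos_left ?_ hspos
    calc (b q).toReal + (∑ i, μ i * k i) - fint q ψ
        ≤ (b q).toReal + (minVal 𝓐 c₀ ψ).toReal - fint q ψ := by linarith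
      _ < ε / 2 := hqlt
  have hfinal := (hkey q hqD).trans_lt (hsum_g ▸ hlast)
  nlinarith [hfinal, hspos, hε]

/-- The uniform (compactness) step: one prior works for all test functions. -/
theorem exists_uniform [Nonempty S] (hA : IsSetAlg 𝓐) (hc₀ : c₀ ∈ Cscr 𝓐) (hb : b ∈ Cscr 𝓐)
    (hgr : (⨅ p ∈ Δset 𝓐, c₀ p) = 0) (hT : Convex ℝ T) (h0T : (0 : ℝ) ∈ T)
    (H : ∀ φ : S → ℝ, IsSimpleFn 𝓐 φ → (∀ s, φ s ∈ T) → minVal 𝓐 c₀ φ ≤ maxVal 𝓐 b φ)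
    {ε : ℝ} (hε : 0 < ε) :
    ∃ p ∈ Δset 𝓐, b p ≠ ⊤ ∧
      ∀ φ : S → ℝ, IsSimpleFn 𝓐 φ → (∀ s, φ s ∈ T) →
        (b p).toReal + (minVal 𝓐 c₀ φ).toReal - fint p φ ≤ ε := by
  classical
  letI : TopologicalSpace (Set S → ℝ) := weakStar 𝓐
  by_contra hcon
  have hch : ∀ p ∈ Δset 𝓐, ∃ φq : S → ℝ, IsSimpleFn 𝓐 φq ∧ (∀ s, φq s ∈ T) ∧
      ((ε - (minVal 𝓐 c₀ φq).toReal + fint p φq : ℝ) : EReal) < b p := by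
    intro p hp
    rcases eq_or_ne (b p) ⊤ with htop | hne
    · refine ⟨fun _ => 0, isSimpleFn_const hA 0, fun _ => h0T, ?_⟩
      rw [htop]; exact EReal.coe_lt_top _
    · have hbb : b p ≠ ⊥ := (hb.1 p hp).ne'
      have hex : ∃ ψ, IsSimpleFn 𝓐 ψ ∧ (∀ s, ψ s ∈ T) ∧
          ε < (b p).toReal + (minVal 𝓐 c₀ ψ).toReal - fint p ψ := by
        by_contra h2
        push_neg at h2
        exact hcon ⟨p, hp, hne, fun ψ h1 h3 => h2 ψ h1 h3⟩
      obtain ⟨ψ, h1, h2, h3⟩ := hex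
      refine ⟨ψ, h1, h2, ?_⟩
      rw [← EReal.coe_toReal hne hbb, EReal.coe_lt_coe_iff]
      linarith
  choose! φq hφq1 hφq2 hφq3 using hch
  have hnbhd : ∀ p ∈ Δset 𝓐, ∃ U : Set (Set S → ℝ), IsOpen U ∧ p ∈ U ∧
      ∀ x ∈ U ∩ Δset 𝓐, b x ≠ ⊤ →
        ε < (b x).toReal + (minVal 𝓐 c₀ (φq p)).toReal - fint x (φq p) := by
    intro p hp
    set kp := (minVal 𝓐 c₀ (φq p)).toReal with hkp
    obtain ⟨y, hy1, hy2⟩ := EReal.exists_between_coe_real (hφq3 p hp)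
    have hcont : Continuous (fun x : Set S → ℝ => ε - kp + fint x (φq p)) :=
      continuous_const.add (fint_continuous_weakStar (hφq1 p hp))
    have hev := hb.2.1 p hp ((y : ℝ) : EReal) hy2
    obtain ⟨W, hWopen, hpW, hWsub⟩ := mem_nhdsWithin.1 hev
    refine ⟨W ∩ {x | ε - kp + fint x (φq p) < y},
      hWopen.inter (isOpen_lt hcont continuous_const), ⟨hpW, ?_⟩, ?_⟩
    · rw [Set.mem_setOf_eq]
      exact EReal.coe_lt_coe_iff.1 hy1
    · rintro x ⟨⟨hxW, hxlt⟩, hxΔ⟩ hbx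
      have h5 : ((y : ℝ) : EReal) < b x := hWsub ⟨hxW, hxΔ⟩
      rw [← EReal.coe_toReal hbx ((hb.1 x hxΔ).ne'), EReal.coe_lt_coe_iff] at h5
      rw [Set.mem_setOf_eq] at hxlt
      linarith
  choose! U hUopen hUmem hUprop using hnbhd
  have hcompact := isCompact_Δset hA
  obtain ⟨t, ht⟩ := hcompact.elim_nhds_subcover' (fun p _ => U p)
    (fun p hp => (hUopen p hp).mem_nhds (hUmem p hp))
  have hfin := finite_sep hA hc₀ hb hgr hT h0T H hε
    (ι := {x : ↥(Δset 𝓐) // x ∈ t}) (fun x => φq x.1.1)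
    (fun x => hφq1 x.1.1 x.1.2) (fun x s => hφq2 x.1.1 x.1.2 s)
  obtain ⟨p, hpΔ, hptop, hple⟩ := hfin
  have hpcov := ht hpΔ
  simp only [Set.mem_iUnion] at hpcov
  obtain ⟨x, hxt, hpU⟩ := hpcov
  have hviol := hUprop x.1 x.2 p ⟨hpU, hpΔ⟩ hptop
  have h2 := hple ⟨x, hxt⟩
  dsimp only at h2
  linarith

end Sep

end Aux

theorem stmt11 {S V : Type*} [Nonempty S] [AddCommGroup V] [Module ℝ V]
    (𝓐 : Set (Set S)) (hA : IsSetAlg 𝓐)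
    (X : Set V) (hX : X.Nonempty) (hXc : Convex ℝ X)
    (R : (S → V) → (S → V) → Prop) (hpref : NiveloidalPref 𝓐 X R)
    (hua : UncertaintyAverse 𝓐 X R)
    (u : V → ℝ) (hu : IsNonconstAffine X u) (h0 : (0 : ℝ) ∈ interior (u '' X))
    (c₀ : (Set S → ℝ) → EReal) (hc₀ : c₀ ∈ Cscr 𝓐)
    (hgr : (⨅ p ∈ Δset 𝓐, c₀ p) = 0)
    (hrep : ∀ f ∈ Acts 𝓐 X, ∀ g ∈ Acts 𝓐 X,
      (R f g ↔ minVal 𝓐 c₀ (uAct u g) ≤ minVal 𝓐 c₀ (uAct u f)))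
    (hatt : ∀ f ∈ Acts 𝓐 X, ∃ p ∈ Δset 𝓐,
      minVal 𝓐 c₀ (uAct u f) = (fint p (uAct u f) : EReal) + c₀ p)
    (xf : (S → V) → V) (hxf : IsCE 𝓐 X R xf) :
    BstarOf 𝓐 X u xf =
      {b | b ∈ Cscr 𝓐 ∧ ∃ ch ∈ Cscr 𝓐, ApproxEq 𝓐 X u ch c₀ ∧
        (⨅ p ∈ Δset 𝓐, (b p + ch p)) ≤ 0} := by
  classical
  have h0T : (0 : ℝ) ∈ u '' X := interior_subset h0
  have hT : Convex ℝ (u '' X) := by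
    rintro t1 ⟨x, hx, rfl⟩ t2 ⟨y, hy, rfl⟩ a c ha hc hac
    refine ⟨a • x + c • y, hXc hx hy ha hc hac, ?_⟩
    have hc' : c = 1 - a := by linarith
    rw [hc', hu.1 x hx y hy a ⟨ha, by linarith⟩]
    simp [smul_eq_mul]
  have hCE : ∀ f ∈ Acts 𝓐 X, ((u (xf f) : ℝ) : EReal) = minVal 𝓐 c₀ (uAct u f) := by
    intro f hf
    obtain ⟨hxfX, hRf, hRb⟩ := hxf f hf
    have hcmem : constAct (xf f) ∈ Acts 𝓐 X := constAct_mem hA hxfX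
    have h1 := (hrep f hf _ hcmem).1 hRf
    have h2 := (hrep _ hcmem f hf).1 hRb
    have heq : uAct u (constAct (xf f)) = fun _ : S => u (xf f) := rfl
    rw [heq, minVal_const hgr (u (xf f))] at h1 h2
    exact le_antisymm h1 h2
  have hBchar : ∀ b', b' ∈ BstarOf 𝓐 X u xf ↔ (b' ∈ Cscr 𝓐 ∧
      ∀ φ : S → ℝ, IsSimpleFn 𝓐 φ → (∀ s, φ s ∈ u '' X) →
        minVal 𝓐 c₀ φ ≤ maxVal 𝓐 b' φ) := by
    intro b'
    constructor
    · rintro ⟨hb, hprop⟩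
      refine ⟨hb, fun φ hs hv => ?_⟩
      obtain ⟨f, hf, hfeq⟩ := exists_act hA hX hs hv
      have h3 := hprop f hf
      rw [hCE f hf, hfeq] at h3
      exact h3
    · rintro ⟨hb, hprop⟩
      refine ⟨hb, fun f hf => ?_⟩
      obtain ⟨hs, hv⟩ := uAct_simple hA hf
      rw [hCE f hf]
      exact hprop _ hs hv
  ext b
  simp only [Set.mem_setOf_eq]
  rw [hBchar b]
  constructor
  · rintro ⟨hb, hprop⟩
    refine ⟨hb, ?_⟩
    have hΦne : Nonempty {φ : S → ℝ // IsSimpleFn 𝓐 φ ∧ ∀ s, φ s ∈ u '' X} :=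
      ⟨⟨fun _ => 0, isSimpleFn_const hA 0, fun _ => h0T⟩⟩
    set ch : (Set S → ℝ) → EReal := fun p =>
      ⨆ φ : {φ : S → ℝ // IsSimpleFn 𝓐 φ ∧ ∀ s, φ s ∈ u '' X},
        (((minVal 𝓐 c₀ φ.1).toReal - fint p φ.1 : ℝ) : EReal) with hchdef
    have hch_ge : ∀ (p : Set S → ℝ)
        (φ : {φ : S → ℝ // IsSimpleFn 𝓐 φ ∧ ∀ s, φ s ∈ u '' X}),
        (((minVal 𝓐 c₀ φ.1).toReal - fint p φ.1 : ℝ) : EReal) ≤ ch p := fun p φ =>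
      le_iSup (fun φ : {φ : S → ℝ // IsSimpleFn 𝓐 φ ∧ ∀ s, φ s ∈ u '' X} =>
        (((minVal 𝓐 c₀ φ.1).toReal - fint p φ.1 : ℝ) : EReal)) φ
    have hch_le : ∀ p ∈ Δset 𝓐, ch p ≤ c₀ p := by
      intro p hp
      refine iSup_le fun φ => ?_
      rcases eq_or_ne (c₀ p) ⊤ with htop | hne
      · rw [htop]; exact le_top
      · have hγ : c₀ p = ((c₀ p).toReal : EReal) :=
          (EReal.coe_toReal hne (hc₀.1 p hp).ne').symm
        rw [hγ, EReal.coe_le_coe_iff]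
        have := minVal_toReal_le hA hgr φ.2.1 hp hγ
        linarith
    have hch_bot : ∀ p ∈ Δset 𝓐, ⊥ < ch p := by
      intro p _
      obtain ⟨φ⟩ := hΦne
      exact lt_of_lt_of_le (EReal.bot_lt_coe _) (hch_ge p φ)
    have hchC : ch ∈ Cscr 𝓐 := by
      refine ⟨hch_bot, ?_, ?_⟩
      · intro p hp y hy
        obtain ⟨φ, hφlt⟩ := lt_iSup_iff.1 hy
        letI : TopologicalSpace (Set S → ℝ) := weakStar 𝓐
        have hcont : Continuous (fun x : Set S → ℝ =>
            (((minVal 𝓐 c₀ φ.1).toReal - fint x φ.1 : ℝ) : EReal)) :=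
          continuous_coe_real_ereal.comp
            (continuous_const.sub (fint_continuous_weakStar φ.2.1))
        have hopen : IsOpen {x : Set S → ℝ |
            y < (((minVal 𝓐 c₀ φ.1).toReal - fint x φ.1 : ℝ) : EReal)} :=
          isOpen_lt continuous_const hcont
        refine Filter.eventually_of_mem (nhdsWithin_le_nhds (hopen.mem_nhds hφlt)) ?_
        intro x hx
        exact hx.trans_le (hch_ge x φ)
      · intro p hp q hq a c ha hc hac
        refine iSup_le fun φ => ?_
        have hfint : fint (a • p + c • q) φ.1 = a * fint p φ.1 + c * fint q φ.1 :=
          fint_combo p q a c φ.1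
        have heq : (((minVal 𝓐 c₀ φ.1).toReal - fint (a • p + c • q) φ.1 : ℝ) : EReal)
            = (a : EReal) * (((minVal 𝓐 c₀ φ.1).toReal - fint p φ.1 : ℝ) : EReal)
              + (c : EReal) * (((minVal 𝓐 c₀ φ.1).toReal - fint q φ.1 : ℝ) : EReal) := by
          rw [← EReal.coe_mul, ← EReal.coe_mul, ← EReal.coe_add]
          norm_cast
          rw [hfint]
          linear_combination (-(minVal 𝓐 c₀ φ.1).toReal) * hac
        rw [heq]
        exact add_le_add
          (mul_le_mul_of_nonneg_left (hch_ge p φ) (by exact_mod_cast ha))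
          (mul_le_mul_of_nonneg_left (hch_ge q φ) (by exact_mod_cast hc))
    have happrox : ApproxEq 𝓐 X u ch c₀ := by
      intro φ hs hv
      apply le_antisymm
      · exact iInf₂_mono fun p hp => add_le_add_right (hch_le p hp) _
      · refine le_iInf₂ fun p hp => ?_
        have h1 := hch_ge p ⟨φ, hs, hv⟩
        calc minVal 𝓐 c₀ φ = ((minVal 𝓐 c₀ φ).toReal : EReal) :=
              (minVal_coe_toReal hA hgr hs).symm
          _ = ((fint p φ : ℝ) : EReal)
              + (((minVal 𝓐 c₀ φ).toReal - fint p φ : ℝ) : EReal) := by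
              rw [← EReal.coe_add]; congr 1; ring
          _ ≤ (fint p φ : EReal) + ch p := add_le_add_right h1 _
    refine ⟨ch, hchC, happrox, ?_⟩
    refine ereal_le_of_forall_lt_add fun δ hδ => ?_
    obtain ⟨p, hpΔ, hptop, hunif⟩ := exists_uniform hA hc₀ hb hgr hT h0T hprop hδ
    have hbreal : b p = ((b p).toReal : EReal) :=
      (EReal.coe_toReal hptop ((hb.1 p hpΔ).ne')).symm
    have hchp : ch p ≤ ((δ - (b p).toReal : ℝ) : EReal) := by
      refine iSup_le fun φ => ?_
      rw [EReal.coe_le_coe_iff]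
      have := hunif φ.1 φ.2.1 φ.2.2
      linarith
    calc (⨅ p' ∈ Δset 𝓐, (b p' + ch p')) ≤ b p + ch p := iInf₂_le p hpΔ
      _ ≤ ((b p).toReal : EReal) + ((δ - (b p).toReal : ℝ) : EReal) :=
          add_le_add (le_of_eq hbreal) hchp
      _ = ((δ : ℝ) : EReal) := by rw [← EReal.coe_add]; congr 1; ring
      _ = 0 + (δ : EReal) := (zero_add _).symm
  · rintro ⟨hb, ch, hchC, happrox, hinf⟩
    refine ⟨hb, fun φ hs hv => ?_⟩
    rw [← happrox φ hs hv]
    refine ereal_le_of_forall_lt_add fun δ hδ => ?_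
    have hlt : (⨅ p ∈ Δset 𝓐, (b p + ch p)) < ((δ : ℝ) : EReal) :=
      lt_of_le_of_lt hinf (by exact_mod_cast hδ)
    obtain ⟨p, hp1⟩ := iInf_lt_iff.1 hlt
    obtain ⟨hpΔ, hplt⟩ := iInf_lt_iff.1 hp1
    have hbbot : b p ≠ ⊥ := (hb.1 p hpΔ).ne'
    have hcbot : ch p ≠ ⊥ := (hchC.1 p hpΔ).ne'
    have hbtop : b p ≠ ⊤ := by
      intro htop
      rw [htop, EReal.top_add_of_ne_bot hcbot] at hplt
      exact absurd hplt not_top_lt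
    have hctop : ch p ≠ ⊤ := by
      intro htop
      rw [htop, EReal.add_top_of_ne_bot hbbot] at hplt
      exact absurd hplt not_top_lt
    have hbeq : b p = (((b p).toReal : ℝ) : EReal) := (EReal.coe_toReal hbtop hbbot).symm
    have hceq : ch p = (((ch p).toReal : ℝ) : EReal) := (EReal.coe_toReal hctop hcbot).symm
    have hsum : (b p).toReal + (ch p).toReal < δ := by
      rw [hbeq, hceq, ← EReal.coe_add, EReal.coe_lt_coe_iff] at hplt
      exact hplt
    have h1 : minVal 𝓐 ch φ ≤ ((fint p φ + (ch p).toReal : ℝ) : EReal) := by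
      have h0 : minVal 𝓐 ch φ ≤ (fint p φ : EReal) + ch p := iInf₂_le p hpΔ
      rwa [hceq, ← EReal.coe_add] at h0
    have h2 : ((fint p φ - (b p).toReal : ℝ) : EReal) ≤ maxVal 𝓐 b φ := by
      have h0 : (fint p φ : EReal) - b p ≤ maxVal 𝓐 b φ :=
        le_iSup₂ (f := fun q (_ : q ∈ Δset 𝓐) => (fint q φ : EReal) - b q) p hpΔ
      rwa [hbeq, ← EReal.coe_sub] at h0
    calc minVal 𝓐 ch φ ≤ ((fint p φ + (ch p).toReal : ℝ) : EReal) := h1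
      _ ≤ ((fint p φ - (b p).toReal : ℝ) : EReal) + ((δ : ℝ) : EReal) := by
          rw [← EReal.coe_add]
          exact EReal.coe_le_coe_iff.2 (by linarith)
      _ ≤ maxVal 𝓐 b φ + (δ : EReal) := add_le_add_left h2 _

end Paper
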